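/- For every θ > 0 the following inequalities hold: (3/2)·θ + 1 < G(1/θ) < 2θ + 1, and (4 − θ)·G(1/θ) < 5θ + 4. In particular, for 0 < θ < 1 one has G(1/θ) < (5θ+4)/(4−θ). -/

import Mathlib

open MeasureTheory

noncomputable def besselK (n : ℕ) (ζ : ℝ) : ℝ :=
  ∫ t in Set.Ioi (0 : ℝ), Real.cosh ((n : ℝ) * t) * Real.exp (-ζ * Real.cosh t)

noncomputable def Gfun (ζ : ℝ) : ℝ := besselK 2 ζ / besselK 1 ζ

open Real Set Filter

namespace StmtAux

/-- quadratic lower bound for cosh -/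
lemma cosh_ge {t : ℝ} (ht : 0 ≤ t) : 1 + t ^ 2 / 2 ≤ Real.cosh t := by
  have h1 : t / 2 ≤ Real.sinh (t / 2) := Real.self_le_sinh_iff.2 (by linarith)
  have h2 : Real.cosh t = Real.cosh (t / 2) ^ 2 + Real.sinh (t / 2) ^ 2 := by
    rw [← Real.cosh_two_mul]; congr 1; ring
  nlinarith [Real.cosh_sq (t / 2), sq_nonneg (Real.sinh (t / 2) - t / 2)]

lemma cosh_le_exp {t : ℝ} (ht : 0 ≤ t) : Real.cosh t ≤ Real.exp t := by
  rw [Real.cosh_eq]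
  have : Real.exp (-t) ≤ Real.exp t := Real.exp_le_exp.2 (by linarith)
  linarith

lemma sinh_le_exp (t : ℝ) : Real.sinh t ≤ Real.exp t := by
  rw [Real.sinh_eq]
  have := Real.exp_pos (-t); have := Real.exp_pos t; linarith

lemma sinh_nonneg' {t : ℝ} (ht : 0 ≤ t) : 0 ≤ Real.sinh t :=
  le_trans ht (Real.self_le_sinh_iff.2 ht)

/-- key exponential bound -/
lemma exp_bound (z n : ℝ) (hz : 0 < z) {t : ℝ} (ht : 0 ≤ t) :
    Real.exp (n * t) * Real.exp (-z * Real.cosh t) ≤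
      Real.exp ((n + 1) ^ 2 / (2 * z)) * Real.exp (-t) := by
  rw [← Real.exp_add, ← Real.exp_add]
  apply Real.exp_le_exp.2
  have hc := cosh_ge ht
  have hD : (n + 1) ^ 2 = (n + 1) ^ 2 / (2 * z) * (2 * z) := by field_simp
  nlinarith [sq_nonneg (z * t - (n + 1)), mul_le_mul_of_nonneg_left hc hz.le, hz, sq_nonneg t]

lemma integrable_exp_mul (z n : ℝ) (hz : 0 < z) :
    IntegrableOn (fun t => Real.exp (n * t) * Real.exp (-z * Real.cosh t)) (Ioi 0) := by
  have hbig : IntegrableOn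
      (fun t => Real.exp ((n + 1) ^ 2 / (2 * z)) * Real.exp (-(1 : ℝ) * t)) (Ioi 0) :=
    (exp_neg_integrableOn_Ioi 0 one_pos).const_mul _
  refine hbig.mono' ?_ ?_
  · exact ((Real.continuous_exp.comp (continuous_const.mul continuous_id)).mul
      (Real.continuous_exp.comp (continuous_const.mul Real.continuous_cosh))).aestronglyMeasurable
  · filter_upwards [ae_restrict_mem measurableSet_Ioi] with t ht
    rw [Real.norm_eq_abs, abs_of_pos (by positivity)]
    have := exp_bound z n hz (le_of_lt ht)
    simpa using this

/-- integrability of A t * exp(-z cosh t) given a bound |A t| ≤ C exp (n t) -/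
lemma intA (z n C : ℝ) (hz : 0 < z) {A : ℝ → ℝ} (hA : Continuous A)
    (hbd : ∀ t : ℝ, 0 < t → |A t| ≤ C * Real.exp (n * t)) :
    IntegrableOn (fun t => A t * Real.exp (-z * Real.cosh t)) (Ioi 0) := by
  refine ((integrable_exp_mul z n hz).const_mul C).mono'
    (hA.mul (Real.continuous_exp.comp (continuous_const.mul Real.continuous_cosh))).aestronglyMeasurable ?_
  filter_upwards [ae_restrict_mem measurableSet_Ioi] with t ht
  rw [Real.norm_eq_abs, abs_mul, abs_of_pos (Real.exp_pos _), ← mul_assoc]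
  exact mul_le_mul_of_nonneg_right (hbd t ht) (Real.exp_pos _).le

/-- tendsto 0 at ∞ given the same kind of bound -/
lemma tendA (z n C : ℝ) (hz : 0 < z) {A : ℝ → ℝ}
    (hbd : ∀ t : ℝ, 0 < t → |A t| ≤ C * Real.exp (n * t)) (hC : 0 ≤ C) :
    Tendsto (fun t => A t * Real.exp (-z * Real.cosh t)) atTop (nhds 0) := by
  apply squeeze_zero_norm' (a := fun t => C * Real.exp ((n + 1) ^ 2 / (2 * z)) * Real.exp (-t))
  · filter_upwards [eventually_gt_atTop (0 : ℝ)] with t ht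
    rw [Real.norm_eq_abs, abs_mul, abs_of_pos (Real.exp_pos _)]
    calc |A t| * Real.exp (-z * Real.cosh t)
        ≤ C * Real.exp (n * t) * Real.exp (-z * Real.cosh t) :=
          mul_le_mul_of_nonneg_right (hbd t ht) (Real.exp_pos _).le
      _ = C * (Real.exp (n * t) * Real.exp (-z * Real.cosh t)) := by ring
      _ ≤ C * (Real.exp ((n + 1) ^ 2 / (2 * z)) * Real.exp (-t)) :=
          mul_le_mul_of_nonneg_left (exp_bound z n hz ht.le) hC
      _ = C * Real.exp ((n + 1) ^ 2 / (2 * z)) * Real.exp (-t) := by ring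
  · have h0 : Tendsto (fun t : ℝ => Real.exp (-t)) atTop (nhds 0) :=
      Real.tendsto_exp_neg_atTop_nhds_zero
    simpa using h0.const_mul (C * Real.exp ((n + 1) ^ 2 / (2 * z)))

lemma integral_pos_on (f : ℝ → ℝ) (hfi : IntegrableOn f (Ioi 0))
    (hpos : ∀ t : ℝ, 0 < t → 0 < f t) : 0 < ∫ t in Ioi (0 : ℝ), f t := by
  have hae : 0 ≤ᵐ[volume.restrict (Ioi 0)] f := by
    filter_upwards [ae_restrict_mem measurableSet_Ioi] with t ht using (hpos t ht).le
  rw [setIntegral_pos_iff_support_of_nonneg_ae hae hfi]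
  have hsub : Ioi (0 : ℝ) ⊆ Function.support f ∩ Ioi 0 := fun t ht =>
    ⟨(hpos t ht).ne', ht⟩
  refine lt_of_lt_of_le ?_ (measure_mono hsub)
  rw [Real.volume_Ioi]; exact ENNReal.zero_lt_top

lemma hderivE (z : ℝ) (x : ℝ) : HasDerivAt (fun t => Real.exp (-z * Real.cosh t))
    (-z * Real.sinh x * Real.exp (-z * Real.cosh x)) x := by
  have h1 : HasDerivAt (fun t => -z * Real.cosh t) (-z * Real.sinh x) x :=
    (Real.hasDerivAt_cosh x).const_mul (-z)
  have := h1.exp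
  convert this using 1; ring

-- basic integrabilities
lemma i0 (z : ℝ) (hz : 0 < z) :
    IntegrableOn (fun t => Real.exp (-z * Real.cosh t)) (Ioi 0) := by
  have h := integrable_exp_mul z 0 hz
  simpa using h

lemma i1 (z : ℝ) (hz : 0 < z) :
    IntegrableOn (fun t => Real.cosh t * Real.exp (-z * Real.cosh t)) (Ioi 0) := by
  refine intA z 1 1 hz Real.continuous_cosh (fun t ht => ?_)
  simp only [one_mul]
  rw [abs_of_pos (Real.cosh_pos t)]
  exact cosh_le_exp ht.le

lemma i2 (z : ℝ) (hz : 0 < z) :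
    IntegrableOn (fun t => Real.cosh (2 * t) * Real.exp (-z * Real.cosh t)) (Ioi 0) := by
  refine intA z 2 1 hz (Real.continuous_cosh.comp (continuous_const.mul continuous_id))
    (fun t ht => ?_)
  simp only [one_mul]
  rw [abs_of_pos (Real.cosh_pos _)]
  exact cosh_le_exp (by linarith)

lemma is (z : ℝ) (hz : 0 < z) :
    IntegrableOn (fun t => Real.sinh t ^ 2 * Real.exp (-z * Real.cosh t)) (Ioi 0) := by
  refine intA z 2 1 hz (by continuity) (fun t ht => ?_)
  have h1 := sinh_nonneg' ht.le
  have h2 := sinh_le_exp t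
  simp only [one_mul]
  rw [abs_of_nonneg (by positivity), two_mul, Real.exp_add]
  nlinarith

lemma icm1 (z : ℝ) (hz : 0 < z) :
    IntegrableOn (fun t => (Real.cosh t - 1) * Real.exp (-z * Real.cosh t)) (Ioi 0) := by
  refine intA z 1 1 hz (by continuity) (fun t ht => ?_)
  have h1 := Real.one_le_cosh t
  have h2 := cosh_le_exp ht.le
  simp only [one_mul]
  rw [abs_of_nonneg (by linarith)]; linarith

lemma iP (z : ℝ) (hz : 0 < z) : IntegrableOn
    (fun t => (Real.cosh t - 1) * Real.sinh t ^ 2 * Real.exp (-z * Real.cosh t)) (Ioi 0) := by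
  refine intA z 3 1 hz (by continuity) (fun t ht => ?_)
  have h1 := Real.one_le_cosh t
  have h2 := cosh_le_exp ht.le
  have h3 := sinh_nonneg' ht.le
  have h4 := sinh_le_exp t
  have h5 : Real.exp (3 * t) = Real.exp t * (Real.exp t * Real.exp t) := by
    rw [← Real.exp_add, ← Real.exp_add]; ring_nf
  have hc1 : (0 : ℝ) ≤ Real.cosh t - 1 := by linarith
  have hs2 : Real.sinh t ^ 2 ≤ Real.exp t * Real.exp t := by nlinarith
  simp only [one_mul]
  rw [abs_of_nonneg (mul_nonneg hc1 (sq_nonneg _)), h5]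
  calc (Real.cosh t - 1) * Real.sinh t ^ 2
      ≤ (Real.cosh t - 1) * (Real.exp t * Real.exp t) := mul_le_mul_of_nonneg_left hs2 hc1
    _ ≤ Real.exp t * (Real.exp t * Real.exp t) := by
        have he : (0 : ℝ) ≤ Real.exp t * Real.exp t := by positivity
        have : Real.cosh t - 1 ≤ Real.exp t := by linarith
        exact mul_le_mul_of_nonneg_right this he

lemma iQ (z : ℝ) (hz : 0 < z) : IntegrableOn
    (fun t => (2 * Real.cosh t + 1) * (Real.cosh t - 1) * Real.exp (-z * Real.cosh t))
    (Ioi 0) := by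
  refine intA z 2 3 hz (by continuity) (fun t ht => ?_)
  have h1 := Real.one_le_cosh t
  have h2 := cosh_le_exp ht.le
  have h5 : Real.exp (2 * t) = Real.exp t * Real.exp t := by
    rw [← Real.exp_add]; ring_nf
  have hcc : Real.cosh t * Real.cosh t ≤ Real.exp t * Real.exp t := by nlinarith
  rw [abs_of_nonneg (by nlinarith), h5]
  nlinarith

lemma iR (z : ℝ) (hz : 0 < z) : IntegrableOn
    (fun t => (2 * Real.cosh t ^ 2 + 2 * Real.cosh t - 1) / (Real.cosh t + 1) *
      Real.exp (-z * Real.cosh t)) (Ioi 0) := by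
  have hcont : Continuous fun t =>
      (2 * Real.cosh t ^ 2 + 2 * Real.cosh t - 1) / (Real.cosh t + 1) := by
    apply Continuous.div (by continuity) (by continuity)
    intro t; positivity
  refine intA z 2 2 hz hcont (fun t ht => ?_)
  have h1 := Real.one_le_cosh t
  have h2 := cosh_le_exp ht.le
  have hd : (0 : ℝ) < Real.cosh t + 1 := by linarith
  have h5 : Real.exp (2 * t) = Real.exp t * Real.exp t := by
    rw [← Real.exp_add]; ring_nf
  have hcc : Real.cosh t * Real.cosh t ≤ Real.exp t * Real.exp t := by nlinarith
  rw [abs_of_nonneg (div_nonneg (by nlinarith) hd.le), h5, div_le_iff₀ hd]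
  nlinarith [mul_le_mul_of_nonneg_right hcc (by linarith : (0:ℝ) ≤ Real.cosh t + 1),
    mul_pos (Real.exp_pos t) (Real.exp_pos t)]

-- IBP 1 : ∫ (cosh t - z sinh² t) E = 0
lemma ibp1 (z : ℝ) (hz : 0 < z) : ∫ t in Ioi (0 : ℝ),
    (Real.cosh t * Real.exp (-z * Real.cosh t) -
      z * (Real.sinh t ^ 2 * Real.exp (-z * Real.cosh t))) = 0 := by
  have hF : ∀ x : ℝ, HasDerivAt (fun t => Real.sinh t * Real.exp (-z * Real.cosh t))
      (Real.cosh x * Real.exp (-z * Real.cosh x) -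
        z * (Real.sinh x ^ 2 * Real.exp (-z * Real.cosh x))) x := by
    intro x
    have := (Real.hasDerivAt_sinh x).mul (hderivE z x)
    exact this.congr_deriv (by ring)
  have hint : IntegrableOn (fun x => Real.cosh x * Real.exp (-z * Real.cosh x) -
      z * (Real.sinh x ^ 2 * Real.exp (-z * Real.cosh x))) (Ioi 0) :=
    (i1 z hz).sub ((is z hz).const_mul z)
  have htend : Tendsto (fun t => Real.sinh t * Real.exp (-z * Real.cosh t)) atTop (nhds 0) := by
    refine tendA z 1 1 hz (fun t ht => ?_) zero_le_one
    simp only [one_mul]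
    rw [abs_of_nonneg (sinh_nonneg' ht.le)]; exact sinh_le_exp t
  have h := integral_Ioi_of_hasDerivAt_of_tendsto' (fun x _ => hF x) hint htend
  simpa using h

-- IBP 2
lemma ibp2 (z : ℝ) (hz : 0 < z) : ∫ t in Ioi (0 : ℝ),
    (Real.cosh (2 * t) * Real.exp (-z * Real.cosh t) -
      Real.cosh t * Real.exp (-z * Real.cosh t) -
      z * ((Real.cosh t - 1) * Real.sinh t ^ 2 * Real.exp (-z * Real.cosh t))) = 0 := by
  have hF : ∀ x : ℝ, HasDerivAt
      (fun t => (Real.cosh t - 1) * Real.sinh t * Real.exp (-z * Real.cosh t))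
      (Real.cosh (2 * x) * Real.exp (-z * Real.cosh x) -
        Real.cosh x * Real.exp (-z * Real.cosh x) -
        z * ((Real.cosh x - 1) * Real.sinh x ^ 2 * Real.exp (-z * Real.cosh x))) x := by
    intro x
    have h1 : HasDerivAt (fun t => (Real.cosh t - 1) * Real.sinh t)
        (Real.sinh x * Real.sinh x + (Real.cosh x - 1) * Real.cosh x) x :=
      ((Real.hasDerivAt_cosh x).sub_const 1).mul (Real.hasDerivAt_sinh x)
    have := h1.mul (hderivE z x)
    refine this.congr_deriv ?_
    rw [Real.cosh_two_mul]
    ring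
  have hint : IntegrableOn (fun t => Real.cosh (2 * t) * Real.exp (-z * Real.cosh t) -
      Real.cosh t * Real.exp (-z * Real.cosh t) -
      z * ((Real.cosh t - 1) * Real.sinh t ^ 2 * Real.exp (-z * Real.cosh t))) (Ioi 0) :=
    (((i2 z hz).sub (i1 z hz)).sub ((iP z hz).const_mul z))
  have htend : Tendsto
      (fun t => (Real.cosh t - 1) * Real.sinh t * Real.exp (-z * Real.cosh t)) atTop (nhds 0) := by
    refine tendA z 2 1 hz (fun t ht => ?_) zero_le_one
    have h1 := Real.one_le_cosh t
    have h2 := cosh_le_exp ht.le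
    have h3 := sinh_nonneg' ht.le
    have h4 := sinh_le_exp t
    have h5 : Real.exp (2 * t) = Real.exp t * Real.exp t := by rw [← Real.exp_add]; ring_nf
    simp only [one_mul]
    rw [abs_of_nonneg (mul_nonneg (by linarith) h3), h5]
    nlinarith
  have h := integral_Ioi_of_hasDerivAt_of_tendsto' (fun x _ => hF x) hint htend
  simpa using h

-- IBP 3
lemma ibp3 (z : ℝ) (hz : 0 < z) : ∫ t in Ioi (0 : ℝ),
    ((2 * Real.cosh t ^ 2 + 2 * Real.cosh t - 1) / (Real.cosh t + 1) *
        Real.exp (-z * Real.cosh t) -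
      z * ((2 * Real.cosh t + 1) * (Real.cosh t - 1) * Real.exp (-z * Real.cosh t))) = 0 := by
  have hF : ∀ x : ℝ, HasDerivAt
      (fun t => (2 * Real.cosh t + 1) / (Real.cosh t + 1) *
        (Real.sinh t * Real.exp (-z * Real.cosh t)))
      ((2 * Real.cosh x ^ 2 + 2 * Real.cosh x - 1) / (Real.cosh x + 1) *
          Real.exp (-z * Real.cosh x) -
        z * ((2 * Real.cosh x + 1) * (Real.cosh x - 1) * Real.exp (-z * Real.cosh x))) x := by
    intro x
    have hd : Real.cosh x + 1 ≠ 0 := by positivity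
    have hq : HasDerivAt (fun t => (2 * Real.cosh t + 1) / (Real.cosh t + 1))
        ((2 * Real.sinh x * (Real.cosh x + 1) - (2 * Real.cosh x + 1) * Real.sinh x) /
          (Real.cosh x + 1) ^ 2) x :=
      (((Real.hasDerivAt_cosh x).const_mul 2).add_const 1).div
        ((Real.hasDerivAt_cosh x).add_const 1) hd
    have hse : HasDerivAt (fun t => Real.sinh t * Real.exp (-z * Real.cosh t))
        (Real.cosh x * Real.exp (-z * Real.cosh x) +
          Real.sinh x * (-z * Real.sinh x * Real.exp (-z * Real.cosh x))) x :=
      (Real.hasDerivAt_sinh x).mul (hderivE z x)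
    have := hq.mul hse
    refine this.congr_deriv ?_
    have hs : Real.sinh x ^ 2 = Real.cosh x ^ 2 - 1 := Real.sinh_sq x
    have hw : (Real.cosh x + 1)⁻¹ * (Real.cosh x + 1) = 1 := inv_mul_cancel₀ hd
    rw [div_eq_mul_inv _ ((Real.cosh x + 1) ^ 2), ← inv_pow]
    linear_combination ((Real.cosh x + 1)⁻¹ ^ 2 * Real.exp (-z * Real.cosh x) -
      z * (2 * Real.cosh x + 1) * (Real.cosh x + 1)⁻¹ * Real.exp (-z * Real.cosh x)) * hs +
      ((Real.cosh x - 1) * (Real.cosh x + 1)⁻¹ * Real.exp (-z * Real.cosh x) -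
      z * (2 * Real.cosh x + 1) * (Real.cosh x - 1) * Real.exp (-z * Real.cosh x)) * hw
  have hint : IntegrableOn (fun t =>
      (2 * Real.cosh t ^ 2 + 2 * Real.cosh t - 1) / (Real.cosh t + 1) *
        Real.exp (-z * Real.cosh t) -
      z * ((2 * Real.cosh t + 1) * (Real.cosh t - 1) * Real.exp (-z * Real.cosh t))) (Ioi 0) :=
    ((iR z hz).sub ((iQ z hz).const_mul z))
  have htend : Tendsto
      (fun t => (2 * Real.cosh t + 1) / (Real.cosh t + 1) *
        (Real.sinh t * Real.exp (-z * Real.cosh t))) atTop (nhds 0) := by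
    have hfun : (fun t => (2 * Real.cosh t + 1) / (Real.cosh t + 1) *
        (Real.sinh t * Real.exp (-z * Real.cosh t))) =
        fun t => ((2 * Real.cosh t + 1) / (Real.cosh t + 1) * Real.sinh t) *
          Real.exp (-z * Real.cosh t) := by
      funext t; ring
    rw [hfun]
    refine tendA z 1 2 hz (fun t ht => ?_) (by norm_num)
    have h1 := Real.one_le_cosh t
    have h3 := sinh_nonneg' ht.le
    have h4 := sinh_le_exp t
    have hd : (0 : ℝ) < Real.cosh t + 1 := by linarith
    have hq2 : (2 * Real.cosh t + 1) / (Real.cosh t + 1) ≤ 2 := by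
      rw [div_le_iff₀ hd]; linarith
    have hq0 : (0 : ℝ) ≤ (2 * Real.cosh t + 1) / (Real.cosh t + 1) :=
      div_nonneg (by linarith) hd.le
    simp only [one_mul]
    rw [abs_of_nonneg (mul_nonneg hq0 h3)]
    calc (2 * Real.cosh t + 1) / (Real.cosh t + 1) * Real.sinh t ≤ 2 * Real.sinh t :=
          mul_le_mul_of_nonneg_right hq2 h3
      _ ≤ 2 * Real.exp t := by linarith
  have h := integral_Ioi_of_hasDerivAt_of_tendsto' (fun x _ => hF x) hint htend
  simpa using h

set_option maxHeartbeats 1000000 in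
lemma bessel_facts (z : ℝ) (hz : 0 < z) :
    0 < besselK 1 z ∧
    besselK 0 z < besselK 1 z ∧
    2 * z * (besselK 1 z - besselK 0 z) < besselK 1 z ∧
    besselK 2 z = besselK 0 z + 2 * (besselK 1 z / z) ∧
    4 * z * (besselK 2 z - besselK 1 z) < besselK 2 z + 5 * besselK 1 z := by
  have hb0 : besselK 0 z = ∫ t in Ioi (0 : ℝ), Real.exp (-z * Real.cosh t) := by
    simp [besselK]
  have hb1 : besselK 1 z = ∫ t in Ioi (0 : ℝ), Real.cosh t * Real.exp (-z * Real.cosh t) := by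
    simp [besselK]
  have hb2 : besselK 2 z = ∫ t in Ioi (0 : ℝ),
      Real.cosh (2 * t) * Real.exp (-z * Real.cosh t) := by
    simp [besselK]
  set K0 := besselK 0 z with hK0
  set K1 := besselK 1 z with hK1
  set K2 := besselK 2 z with hK2
  set S := ∫ t in Ioi (0 : ℝ), Real.sinh t ^ 2 * Real.exp (-z * Real.cosh t) with hS
  set P := ∫ t in Ioi (0 : ℝ),
    (Real.cosh t - 1) * Real.sinh t ^ 2 * Real.exp (-z * Real.cosh t) with hP
  set Q := ∫ t in Ioi (0 : ℝ),
    (2 * Real.cosh t + 1) * (Real.cosh t - 1) * Real.exp (-z * Real.cosh t) with hQ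
  set R := ∫ t in Ioi (0 : ℝ),
    (2 * Real.cosh t ^ 2 + 2 * Real.cosh t - 1) / (Real.cosh t + 1) *
      Real.exp (-z * Real.cosh t) with hR
  have e1 : K1 = z * S := by
    have h := ibp1 z hz
    rw [integral_sub (i1 z hz) ((is z hz).const_mul z), integral_const_mul] at h
    rw [hb1, hS]; linarith
  have e2 : K2 - K1 = z * P := by
    have h := ibp2 z hz
    have hi21 : IntegrableOn (fun t => Real.cosh (2 * t) * Real.exp (-z * Real.cosh t) -
        Real.cosh t * Real.exp (-z * Real.cosh t)) (Ioi 0) := (i2 z hz).sub (i1 z hz)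
    rw [integral_sub hi21 ((iP z hz).const_mul z),
      integral_sub (i2 z hz) (i1 z hz), integral_const_mul] at h
    rw [hb2, hb1, hP]; linarith
  have e3 : R = z * Q := by
    have h := ibp3 z hz
    rw [integral_sub (iR z hz) ((iQ z hz).const_mul z), integral_const_mul] at h
    rw [hR, hQ]; linarith
  have e4 : Q = K2 - K1 := by
    have hfun : (fun t => (2 * Real.cosh t + 1) * (Real.cosh t - 1) *
        Real.exp (-z * Real.cosh t)) =
        fun t => Real.cosh (2 * t) * Real.exp (-z * Real.cosh t) -
          Real.cosh t * Real.exp (-z * Real.cosh t) := by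
      funext t
      rw [Real.cosh_two_mul, Real.sinh_sq]
      ring
    rw [hQ, hfun, integral_sub (i2 z hz) (i1 z hz), ← hb2, ← hb1]
  have e5 : K2 = K0 + 2 * S := by
    have hfun : (fun t => Real.cosh (2 * t) * Real.exp (-z * Real.cosh t)) =
        fun t => Real.exp (-z * Real.cosh t) +
          2 * (Real.sinh t ^ 2 * Real.exp (-z * Real.cosh t)) := by
      funext t
      rw [Real.cosh_two_mul, Real.sinh_sq]
      ring
    rw [hb2, hfun, integral_add (i0 z hz) ((is z hz).const_mul 2), integral_const_mul,
      ← hb0, ← hS]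
  have posK1 : 0 < K1 := by
    rw [hb1]
    exact integral_pos_on _ (i1 z hz)
      (fun t ht => mul_pos (Real.cosh_pos t) (Real.exp_pos _))
  have hS1 : 0 < ∫ t in Ioi (0 : ℝ), (Real.cosh t - 1) * Real.exp (-z * Real.cosh t) := by
    refine integral_pos_on _ (icm1 z hz) (fun t ht => ?_)
    have := cosh_ge ht.le
    have h2 : 0 < t ^ 2 := by positivity
    exact mul_pos (by nlinarith) (Real.exp_pos _)
  have hdiff : (∫ t in Ioi (0 : ℝ), (Real.cosh t - 1) * Real.exp (-z * Real.cosh t)) =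
      K1 - K0 := by
    have hfun2 : (fun t => (Real.cosh t - 1) * Real.exp (-z * Real.cosh t)) =
        fun t => Real.cosh t * Real.exp (-z * Real.cosh t) - Real.exp (-z * Real.cosh t) := by
      funext t; ring
    rw [hfun2, integral_sub (i1 z hz) (i0 z hz), ← hb1, ← hb0]
  have hK01 : K0 < K1 := by
    rw [hdiff] at hS1; linarith
  have hS2 : 0 < ∫ t in Ioi (0 : ℝ),
      (Real.sinh t ^ 2 * Real.exp (-z * Real.cosh t) -
        2 * ((Real.cosh t - 1) * Real.exp (-z * Real.cosh t))) := by
    refine integral_pos_on _ ((is z hz).sub ((icm1 z hz).const_mul 2)) (fun t ht => ?_)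
    have hc := cosh_ge ht.le
    have h2 : 0 < t ^ 2 := by positivity
    have hcc : 0 < Real.cosh t - 1 := by nlinarith
    have hs := Real.sinh_sq t
    have hE := Real.exp_pos (-z * Real.cosh t)
    nlinarith [mul_pos (mul_pos hcc hcc) hE]
  have hB : 2 * z * (K1 - K0) < K1 := by
    rw [integral_sub (is z hz) ((icm1 z hz).const_mul 2), integral_const_mul, ← hS,
      hdiff] at hS2
    have h2 : 2 * (K1 - K0) < S := by linarith
    nlinarith [mul_lt_mul_of_pos_left h2 hz]
  have hS3 : 0 < ∫ t in Ioi (0 : ℝ),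
      (Real.cosh (2 * t) * Real.exp (-z * Real.cosh t) +
        5 * (Real.cosh t * Real.exp (-z * Real.cosh t)) -
        4 * ((2 * Real.cosh t ^ 2 + 2 * Real.cosh t - 1) / (Real.cosh t + 1) *
          Real.exp (-z * Real.cosh t))) := by
    refine integral_pos_on _
      (((i2 z hz).add ((i1 z hz).const_mul 5)).sub ((iR z hz).const_mul 4)) (fun t ht => ?_)
    have hc := cosh_ge ht.le
    have h2 : 0 < t ^ 2 := by positivity
    have hcc : 0 < Real.cosh t - 1 := by nlinarith
    have hd : (0 : ℝ) < Real.cosh t + 1 := by linarith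
    have hc2 : Real.cosh (2 * t) = 2 * Real.cosh t ^ 2 - 1 := by
      rw [Real.cosh_two_mul, Real.sinh_sq]; ring
    have hdiv : 4 * ((2 * Real.cosh t ^ 2 + 2 * Real.cosh t - 1) / (Real.cosh t + 1)) <
        2 * Real.cosh t ^ 2 + 5 * Real.cosh t - 1 := by
      rw [mul_div_assoc', div_lt_iff₀ hd]
      nlinarith [mul_pos (mul_pos hcc hcc) (by linarith : (0:ℝ) < 2 * Real.cosh t + 3)]
    have hE := Real.exp_pos (-z * Real.cosh t)
    have hgoal : Real.cosh (2 * t) + 5 * Real.cosh t -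
        4 * ((2 * Real.cosh t ^ 2 + 2 * Real.cosh t - 1) / (Real.cosh t + 1)) > 0 := by
      rw [hc2]; linarith
    nlinarith [mul_pos hgoal hE]
  have hC : 4 * z * (K2 - K1) < K2 + 5 * K1 := by
    have hi25 : IntegrableOn (fun t => Real.cosh (2 * t) * Real.exp (-z * Real.cosh t) +
        5 * (Real.cosh t * Real.exp (-z * Real.cosh t))) (Ioi 0) :=
      (i2 z hz).add ((i1 z hz).const_mul 5)
    rw [integral_sub hi25 ((iR z hz).const_mul 4),
      integral_add (i2 z hz) ((i1 z hz).const_mul 5), integral_const_mul,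
      integral_const_mul, ← hb2, ← hb1, ← hR] at hS3
    have hR4 : R = z * (K2 - K1) := by rw [e3, ← e4]
    rw [hR4] at hS3
    linarith
  refine ⟨posK1, hK01, hB, ?_, hC⟩
  rw [e5, e1]
  field_simp

end StmtAux

theorem stmt2 (θ : ℝ) (hθ : 0 < θ) :
    (3 / 2) * θ + 1 < Gfun (1 / θ) ∧ Gfun (1 / θ) < 2 * θ + 1 ∧
    (4 - θ) * Gfun (1 / θ) < 5 * θ + 4 ∧
    (θ < 1 → Gfun (1 / θ) < (5 * θ + 4) / (4 - θ)) := by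
  have hz : 0 < 1 / θ := by positivity
  obtain ⟨h1, h01, hB, hrec, hC⟩ := StmtAux.bessel_facts (1 / θ) hz
  set K0 := besselK 0 (1 / θ) with hK0
  set K1 := besselK 1 (1 / θ) with hK1
  set K2 := besselK 2 (1 / θ) with hK2
  have hG : Gfun (1 / θ) = K2 / K1 := rfl
  have hθz : θ * (1 / θ) = 1 := by field_simp
  have hrec' : K2 = K0 + 2 * θ * K1 := by
    rw [hrec, one_div, div_eq_mul_inv, inv_inv]; ring
  have hB' : 2 * (K1 - K0) < θ * K1 := by
    have h := mul_lt_mul_of_pos_left hB hθ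
    have hrw : θ * (2 * (1 / θ) * (K1 - K0)) = 2 * (K1 - K0) := by
      linear_combination (2 * (K1 - K0)) * hθz
    linarith [hrw ▸ h]
  have hC' : 4 * (K2 - K1) < θ * (K2 + 5 * K1) := by
    have h := mul_lt_mul_of_pos_left hC hθ
    have hrw : θ * (4 * (1 / θ) * (K2 - K1)) = 4 * (K2 - K1) := by
      linear_combination (4 * (K2 - K1)) * hθz
    linarith [hrw ▸ h]
  have hG1 : ((3 / 2) * θ + 1) * K1 < K2 := by nlinarith [hrec', hB']
  have hG2 : K2 < (2 * θ + 1) * K1 := by nlinarith [hrec', h01]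
  have h3 : (4 - θ) * K2 < (5 * θ + 4) * K1 := by nlinarith [hC']
  refine ⟨?_, ?_, ?_, ?_⟩
  · rw [hG, lt_div_iff₀ h1]; exact hG1
  · rw [hG, div_lt_iff₀ h1]; exact hG2
  · rw [hG, mul_div_assoc', div_lt_iff₀ h1]; exact h3
  · intro hθ1
    have h4 : (0 : ℝ) < 4 - θ := by linarith
    rw [hG, lt_div_iff₀ h4, mul_comm, mul_div_assoc', div_lt_iff₀ h1]
    exact h3
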